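/- The pair of functions W₁(ξ) = (ξ + conj(ξ))/(1 − |ξ|²) and W₂(ξ) = (conj(ξ) − ξ)/(1 − |ξ|²), defined on the open unit disc {ξ ∈ ℂ : |ξ| < 1}, satisfies the ℂP² sigma model Euler–Lagrange equations: ∂∂̄W₁ − (2·conj(W₁)/A)·∂W₁·∂̄W₁ − (conj(W₂)/A)·(∂W₁·∂̄W₂ + ∂̄W₁·∂W₂) = 0 and ∂∂̄W₂ − (2·conj(W₂)/A)·∂W₂·∂̄W₂ − (conj(W₁)/A)·(∂W₁·∂̄W₂ + ∂̄W₁·∂W₂) = 0, where A = 1 + |W₁|² + |W₂|². -/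

import Mathlib

open Complex

/-- The Wirtinger derivative `∂F(ξ) = (1/2)(DF(ξ)(1) − i·DF(ξ)(i))`. -/
noncomputable def wd {E : Type*} [NormedAddCommGroup E] [NormedSpace ℂ E]
    (F : ℂ → E) (ξ : ℂ) : E :=
  (2 : ℂ)⁻¹ • (fderiv ℝ F ξ 1 - Complex.I • fderiv ℝ F ξ Complex.I)

/-- The Wirtinger derivative `∂̄F(ξ) = (1/2)(DF(ξ)(1) + i·DF(ξ)(i))`. -/
noncomputable def wdbar {E : Type*} [NormedAddCommGroup E] [NormedSpace ℂ E]
    (F : ℂ → E) (ξ : ℂ) : E :=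
  (2 : ℂ)⁻¹ • (fderiv ℝ F ξ 1 + Complex.I • fderiv ℝ F ξ Complex.I)

/-- The real-linear map `v ↦ a v + b conj v`. -/
noncomputable def LL (a b : ℂ) : ℂ →L[ℝ] ℂ :=
  a • (ContinuousLinearMap.id ℝ ℂ) + b • (Complex.conjCLE.toContinuousLinearMap)

lemma LL_apply (a b v : ℂ) : LL a b v = a * v + b * (starRingEnd ℂ) v := by
  simp [LL, ContinuousLinearMap.smul_apply, smul_eq_mul]

lemma LL_congr {a b a' b' : ℂ} (h1 : a = a') (h2 : b = b') : LL a b = LL a' b' := by rw [h1, h2]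

lemma hasL_id (ξ : ℂ) : HasFDerivAt (fun z : ℂ => z) (LL 1 0) ξ :=
  (hasFDerivAt_id ξ).congr_fderiv (by ext v; simp [LL_apply])

lemma hasL_conj (ξ : ℂ) : HasFDerivAt (fun z : ℂ => (starRingEnd ℂ) z) (LL 0 1) ξ := by
  have h := Complex.conjCLE.hasFDerivAt (x := ξ)
  exact h.congr_fderiv (by ext v; simp [LL_apply])

lemma hasL_const (ξ c : ℂ) : HasFDerivAt (fun _ : ℂ => c) (LL 0 0) ξ :=
  (hasFDerivAt_const c ξ).congr_fderiv (by ext v; simp [LL_apply])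

lemma hasL_add {f g : ℂ → ℂ} {ξ a b c d : ℂ} (hf : HasFDerivAt f (LL a b) ξ)
    (hg : HasFDerivAt g (LL c d) ξ) :
    HasFDerivAt (fun z => f z + g z) (LL (a + c) (b + d)) ξ :=
  (hf.add hg).congr_fderiv (by ext v; simp [LL_apply]; ring)

lemma hasL_sub {f g : ℂ → ℂ} {ξ a b c d : ℂ} (hf : HasFDerivAt f (LL a b) ξ)
    (hg : HasFDerivAt g (LL c d) ξ) :
    HasFDerivAt (fun z => f z - g z) (LL (a - c) (b - d)) ξ :=
  (hf.sub hg).congr_fderiv (by ext v; simp [LL_apply]; ring)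

lemma hasL_mul {f g : ℂ → ℂ} {ξ a b c d : ℂ} (hf : HasFDerivAt f (LL a b) ξ)
    (hg : HasFDerivAt g (LL c d) ξ) :
    HasFDerivAt (fun z => f z * g z)
      (LL (a * g ξ + f ξ * c) (b * g ξ + f ξ * d)) ξ :=
  (hf.mul hg).congr_fderiv (by ext v; simp [LL_apply, smul_eq_mul]; ring)

lemma hasL_div {f g : ℂ → ℂ} {ξ a b c d : ℂ} (hf : HasFDerivAt f (LL a b) ξ)
    (hg : HasFDerivAt g (LL c d) ξ) (hgξ : g ξ ≠ 0) :
    HasFDerivAt (fun z => f z / g z)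
      (LL ((a * g ξ - f ξ * c) / g ξ ^ 2) ((b * g ξ - f ξ * d) / g ξ ^ 2)) ξ := by
  have hinv : HasFDerivAt (fun z => (g z)⁻¹) (LL (-(c / g ξ ^ 2)) (-(d / g ξ ^ 2))) ξ := by
    have h := (hasFDerivAt_inv' (𝕜 := ℝ) hgξ).comp ξ hg
    exact h.congr_fderiv (by
      ext v
      simp [LL_apply, ContinuousLinearMap.comp_apply, ContinuousLinearMap.mulLeftRight_apply]
      field_simp
      ring)
  simp only [div_eq_mul_inv]
  exact (hasL_mul hf hinv).congr_fderiv (LL_congr (by field_simp; ring) (by field_simp; ring))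

lemma wd_eq {F : ℂ → ℂ} {ξ a b : ℂ} (h : HasFDerivAt F (LL a b) ξ) : wd F ξ = a := by
  simp only [wd, h.fderiv, LL_apply, smul_eq_mul, map_one, Complex.conj_I, mul_one]
  have : Complex.I * Complex.I = -1 := Complex.I_mul_I
  field_simp
  linear_combination (-a + b) * this

lemma wdbar_eq {F : ℂ → ℂ} {ξ a b : ℂ} (h : HasFDerivAt F (LL a b) ξ) : wdbar F ξ = b := by
  simp only [wdbar, h.fderiv, LL_apply, smul_eq_mul, map_one, Complex.conj_I, mul_one]
  have : Complex.I * Complex.I = -1 := Complex.I_mul_I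
  field_simp
  linear_combination (a - b) * this

/-- Derivative of `W₁`. -/
lemma hasW1 {z : ℂ} (hz : (1:ℂ) - z * (starRingEnd ℂ) z ≠ 0) :
    HasFDerivAt (fun w => (w + (starRingEnd ℂ) w) / (1 - w * (starRingEnd ℂ) w))
      (LL ((1 + ((starRingEnd ℂ) z)^2) / (1 - z * (starRingEnd ℂ) z)^2)
          ((1 + z^2) / (1 - z * (starRingEnd ℂ) z)^2)) z := by
  have hden := hasL_sub (hasL_const z 1) (hasL_mul (hasL_id z) (hasL_conj z))
  have h := hasL_div (hasL_add (hasL_id z) (hasL_conj z)) hden hz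
  exact h.congr_fderiv (LL_congr (by field_simp; ring) (by field_simp; ring))

/-- Derivative of `W₂`. -/
lemma hasW2 {z : ℂ} (hz : (1:ℂ) - z * (starRingEnd ℂ) z ≠ 0) :
    HasFDerivAt (fun w => ((starRingEnd ℂ) w - w) / (1 - w * (starRingEnd ℂ) w))
      (LL ((((starRingEnd ℂ) z)^2 - 1) / (1 - z * (starRingEnd ℂ) z)^2)
          ((1 - z^2) / (1 - z * (starRingEnd ℂ) z)^2)) z := by
  have hden := hasL_sub (hasL_const z 1) (hasL_mul (hasL_id z) (hasL_conj z))
  have h := hasL_div (hasL_sub (hasL_conj z) (hasL_id z)) hden hz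
  exact h.congr_fderiv (LL_congr (by field_simp; ring) (by field_simp; ring))

/-- Derivative of `∂̄W₁` (as explicit formula). -/
lemma hasP1 {z : ℂ} (hz : (1:ℂ) - z * (starRingEnd ℂ) z ≠ 0) :
    HasFDerivAt (fun w => (1 + w^2) / (1 - w * (starRingEnd ℂ) w)^2)
      (LL (2 * (z + (starRingEnd ℂ) z) / (1 - z * (starRingEnd ℂ) z)^3)
          (2 * z * (1 + z^2) / (1 - z * (starRingEnd ℂ) z)^3)) z := by
  have hfun : (fun w : ℂ => (1 + w^2) / (1 - w * (starRingEnd ℂ) w)^2)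
      = fun w => (1 + w * w) / ((1 - w * (starRingEnd ℂ) w) * (1 - w * (starRingEnd ℂ) w)) := by
    funext w; rw [pow_two, pow_two]
  rw [hfun]
  have hD := hasL_sub (hasL_const z 1) (hasL_mul (hasL_id z) (hasL_conj z))
  have hden := hasL_mul hD hD
  have hnum := hasL_add (hasL_const z 1) (hasL_mul (hasL_id z) (hasL_id z))
  have hz2 : ((1:ℂ) - z * (starRingEnd ℂ) z) * (1 - z * (starRingEnd ℂ) z) ≠ 0 :=
    mul_ne_zero hz hz
  have h := hasL_div hnum hden hz2
  exact h.congr_fderiv (LL_congr (by field_simp; ring) (by field_simp; ring))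

/-- Derivative of `∂̄W₂` (as explicit formula). -/
lemma hasP2 {z : ℂ} (hz : (1:ℂ) - z * (starRingEnd ℂ) z ≠ 0) :
    HasFDerivAt (fun w => (1 - w^2) / (1 - w * (starRingEnd ℂ) w)^2)
      (LL (2 * ((starRingEnd ℂ) z - z) / (1 - z * (starRingEnd ℂ) z)^3)
          (2 * z * (1 - z^2) / (1 - z * (starRingEnd ℂ) z)^3)) z := by
  have hfun : (fun w : ℂ => (1 - w^2) / (1 - w * (starRingEnd ℂ) w)^2)
      = fun w => (1 - w * w) / ((1 - w * (starRingEnd ℂ) w) * (1 - w * (starRingEnd ℂ) w)) := by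
    funext w; rw [pow_two, pow_two]
  rw [hfun]
  have hD := hasL_sub (hasL_const z 1) (hasL_mul (hasL_id z) (hasL_conj z))
  have hden := hasL_mul hD hD
  have hnum := hasL_sub (hasL_const z 1) (hasL_mul (hasL_id z) (hasL_id z))
  have hz2 : ((1:ℂ) - z * (starRingEnd ℂ) z) * (1 - z * (starRingEnd ℂ) z) ≠ 0 :=
    mul_ne_zero hz hz
  have h := hasL_div hnum hden hz2
  exact h.congr_fderiv (LL_congr (by field_simp; ring) (by field_simp; ring))

set_option maxHeartbeats 2000000 in
/-- The pair `W₁ = (ξ + conj ξ)/(1 − |ξ|²)`, `W₂ = (conj ξ − ξ)/(1 − |ξ|²)` on the open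
unit disc is a (mixed) solution of the `ℂP²` sigma model Euler–Lagrange equations. -/
theorem mixed_solution_CP2 (W₁ W₂ : ℂ → ℂ)
    (hW₁ : W₁ = fun ξ => (ξ + (starRingEnd ℂ) ξ) / (1 - (Complex.normSq ξ : ℂ)))
    (hW₂ : W₂ = fun ξ => ((starRingEnd ℂ) ξ - ξ) / (1 - (Complex.normSq ξ : ℂ)))
    (A : ℂ → ℂ)
    (hA : A = fun ξ => 1 + (Complex.normSq (W₁ ξ) : ℂ) + (Complex.normSq (W₂ ξ) : ℂ)) :
    ∀ ξ ∈ Metric.ball (0 : ℂ) 1,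
      wd (fun z => wdbar W₁ z) ξ
          - (2 * (starRingEnd ℂ) (W₁ ξ) / A ξ) * wd W₁ ξ * wdbar W₁ ξ
          - ((starRingEnd ℂ) (W₂ ξ) / A ξ)
            * (wd W₁ ξ * wdbar W₂ ξ + wdbar W₁ ξ * wd W₂ ξ) = 0 ∧
      wd (fun z => wdbar W₂ z) ξ
          - (2 * (starRingEnd ℂ) (W₂ ξ) / A ξ) * wd W₂ ξ * wdbar W₂ ξ
          - ((starRingEnd ℂ) (W₁ ξ) / A ξ)
            * (wd W₁ ξ * wdbar W₂ ξ + wdbar W₁ ξ * wd W₂ ξ) = 0 := by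
  have hW₁' : W₁ = fun z => (z + (starRingEnd ℂ) z) / (1 - z * (starRingEnd ℂ) z) := by
    rw [hW₁]; funext z; rw [Complex.mul_conj]
  have hW₂' : W₂ = fun z => ((starRingEnd ℂ) z - z) / (1 - z * (starRingEnd ℂ) z) := by
    rw [hW₂]; funext z; rw [Complex.mul_conj]
  intro ξ hξ
  set c := (starRingEnd ℂ) ξ with hc
  have hnorm : ‖ξ‖ < 1 := mem_ball_zero_iff.mp hξ
  have hnsq : Complex.normSq ξ < 1 := by
    rw [Complex.normSq_eq_norm_sq]
    calc ‖ξ‖ ^ 2 ≤ ‖ξ‖ := by nlinarith [norm_nonneg ξ]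
    _ < 1 := hnorm
  have hDr : (0:ℝ) < 1 - Complex.normSq ξ := by linarith
  have hD : (1:ℂ) - ξ * c ≠ 0 := by
    rw [hc, Complex.mul_conj, ← Complex.ofReal_one, ← Complex.ofReal_sub]
    exact_mod_cast hDr.ne'
  have h1c : (1:ℂ) + ξ * c ≠ 0 := by
    rw [hc, Complex.mul_conj, ← Complex.ofReal_one, ← Complex.ofReal_add]
    exact_mod_cast (by nlinarith [Complex.normSq_nonneg ξ] : (0:ℝ) < 1 + Complex.normSq ξ).ne'
  -- values of first derivatives
  have v1 : wd W₁ ξ = (1 + c^2) / (1 - ξ * c)^2 := by rw [hW₁']; exact wd_eq (hasW1 hD)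
  have v1' : wdbar W₁ ξ = (1 + ξ^2) / (1 - ξ * c)^2 := by rw [hW₁']; exact wdbar_eq (hasW1 hD)
  have v2 : wd W₂ ξ = (c^2 - 1) / (1 - ξ * c)^2 := by rw [hW₂']; exact wd_eq (hasW2 hD)
  have v2' : wdbar W₂ ξ = (1 - ξ^2) / (1 - ξ * c)^2 := by rw [hW₂']; exact wdbar_eq (hasW2 hD)
  -- the set where the denominator does not vanish
  have hUopen : IsOpen {z : ℂ | (1:ℂ) - z * (starRingEnd ℂ) z ≠ 0} := by
    have hcont : Continuous fun z : ℂ => (1:ℂ) - z * (starRingEnd ℂ) z := by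
      continuity
    exact isOpen_compl_singleton.preimage hcont
  have hmem : {z : ℂ | (1:ℂ) - z * (starRingEnd ℂ) z ≠ 0} ∈ nhds ξ :=
    hUopen.mem_nhds hD
  -- second derivatives
  have s1 : wd (fun z => wdbar W₁ z) ξ = 2 * (ξ + c) / (1 - ξ * c)^3 := by
    have heq : (fun z => wdbar W₁ z) =ᶠ[nhds ξ]
        (fun z => (1 + z^2) / (1 - z * (starRingEnd ℂ) z)^2) := by
      filter_upwards [hmem] with z hz
      rw [hW₁']; exact wdbar_eq (hasW1 hz)
    have hfd : fderiv ℝ (fun z => wdbar W₁ z) ξ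
        = fderiv ℝ (fun z => (1 + z^2) / (1 - z * (starRingEnd ℂ) z)^2) ξ := heq.fderiv_eq
    have : wd (fun z => wdbar W₁ z) ξ
        = wd (fun z => (1 + z^2) / (1 - z * (starRingEnd ℂ) z)^2) ξ := by
      unfold wd; rw [hfd]
    rw [this]
    exact wd_eq (hasP1 hD)
  have s2 : wd (fun z => wdbar W₂ z) ξ = 2 * (c - ξ) / (1 - ξ * c)^3 := by
    have heq : (fun z => wdbar W₂ z) =ᶠ[nhds ξ]
        (fun z => (1 - z^2) / (1 - z * (starRingEnd ℂ) z)^2) := by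
      filter_upwards [hmem] with z hz
      rw [hW₂']; exact wdbar_eq (hasW2 hz)
    have hfd : fderiv ℝ (fun z => wdbar W₂ z) ξ
        = fderiv ℝ (fun z => (1 - z^2) / (1 - z * (starRingEnd ℂ) z)^2) ξ := heq.fderiv_eq
    have : wd (fun z => wdbar W₂ z) ξ
        = wd (fun z => (1 - z^2) / (1 - z * (starRingEnd ℂ) z)^2) ξ := by
      unfold wd; rw [hfd]
    rw [this]
    exact wd_eq (hasP2 hD)
  -- conjugates and A
  have cW1 : (starRingEnd ℂ) (W₁ ξ) = (c + ξ) / (1 - c * ξ) := by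
    rw [hW₁']; simp [map_div₀, hc]
  have cW2 : (starRingEnd ℂ) (W₂ ξ) = (ξ - c) / (1 - c * ξ) := by
    rw [hW₂']; simp [map_div₀, hc]
  have hAval : A ξ = (1 + ξ * c)^2 / (1 - ξ * c)^2 := by
    rw [hA]
    simp only
    rw [← Complex.mul_conj, ← Complex.mul_conj, cW1, cW2]
    rw [hW₁', hW₂']
    simp only
    rw [← hc]
    have hD' : (1:ℂ) - c * ξ ≠ 0 := by rw [mul_comm]; exact hD
    field_simp
    ring
  have hW1v : W₁ ξ = (ξ + c) / (1 - ξ * c) := by rw [hW₁']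
  have hW2v : W₂ ξ = (c - ξ) / (1 - ξ * c) := by rw [hW₂']
  have hD' : (1:ℂ) - c * ξ ≠ 0 := by rw [mul_comm]; exact hD
  have hAinv : (A ξ)⁻¹ = (1 - ξ * c)^2 / (1 + ξ * c)^2 := by
    rw [hAval, inv_div]
  have cW1' : (starRingEnd ℂ) (W₁ ξ) = (ξ + c) / (1 - ξ * c) := by rw [cW1]; ring
  have cW2' : (starRingEnd ℂ) (W₂ ξ) = (ξ - c) / (1 - ξ * c) := by rw [cW2]; ring
  constructor
  · rw [s1, v1, v1', v2, v2', cW1', cW2']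
    rw [div_eq_mul_inv (2 * ((ξ + c) / (1 - ξ * c))), div_eq_mul_inv ((ξ - c) / (1 - ξ * c)),
      hAinv]
    simp only [div_mul_eq_mul_div, ← mul_div_assoc, div_div, ← add_div]
    rw [div_sub_div _ _
      (by repeat' apply mul_ne_zero
          all_goals first
            | assumption
            | exact pow_ne_zero _ hD
            | exact pow_ne_zero _ h1c)
      (by repeat' apply mul_ne_zero
          all_goals first
            | assumption
            | exact pow_ne_zero _ hD
            | exact pow_ne_zero _ h1c),
      div_sub_div _ _
      (by repeat' apply mul_ne_zero
          all_goals first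
            | assumption
            | exact pow_ne_zero _ hD
            | exact pow_ne_zero _ h1c)
      (by repeat' apply mul_ne_zero
          all_goals first
            | assumption
            | exact pow_ne_zero _ hD
            | exact pow_ne_zero _ h1c),
      div_eq_zero_iff]
    left
    ring
  · rw [s2, v1, v1', v2, v2', cW1', cW2']
    rw [div_eq_mul_inv (2 * ((ξ - c) / (1 - ξ * c))), div_eq_mul_inv ((ξ + c) / (1 - ξ * c)),
      hAinv]
    simp only [div_mul_eq_mul_div, ← mul_div_assoc, div_div, ← add_div]
    rw [div_sub_div _ _
      (by repeat' apply mul_ne_zero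
          all_goals first
            | assumption
            | exact pow_ne_zero _ hD
            | exact pow_ne_zero _ h1c)
      (by repeat' apply mul_ne_zero
          all_goals first
            | assumption
            | exact pow_ne_zero _ hD
            | exact pow_ne_zero _ h1c),
      div_sub_div _ _
      (by repeat' apply mul_ne_zero
          all_goals first
            | assumption
            | exact pow_ne_zero _ hD
            | exact pow_ne_zero _ h1c)
      (by repeat' apply mul_ne_zero
          all_goals first
            | assumption
            | exact pow_ne_zero _ hD
            | exact pow_ne_zero _ h1c),
      div_eq_zero_iff]
    left
    ring
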